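/- Let G = (X, Y, u) be a continuous zero-sum game and ε > 0. The double oracle algorithm terminates after finitely many iterations with duality gap U(x_{i+1}, q_i*) − U(p_i*, y_{i+1}) ≤ ε, and the output (p_i*, q_i*) is a finitely supported ε-equilibrium of G. -/

import Mathlib

open MeasureTheory Filter

namespace Stmt11Aux

lemma integrable_of_bound {α : Type*} [MeasurableSpace α] [TopologicalSpace α]
    [OpensMeasurableSpace α] {μ : Measure α} [IsFiniteMeasure μ] {f : α → ℝ}
    (hf : Continuous f) {C : ℝ} (hC : ∀ a, ‖f a‖ ≤ C) : Integrable f μ :=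
  ⟨hf.aestronglyMeasurable, HasFiniteIntegral.of_bounded (Eventually.of_forall hC)⟩

lemma sep_lemma {α : Type*} [MetricSpace α] [CompactSpace α] (x : ℕ → α) (δ : ℝ) (hδ : 0 < δ)
    (S : Set ℕ) (hS : S.Infinite)
    (hsep : ∀ i ∈ S, ∀ j ∈ S, i < j → δ ≤ dist (x i) (x j)) : False := by
  classical
  set f := hS.natEmbedding with hf
  obtain ⟨a, -, φ, hφ, hconv⟩ :=
    (isCompact_univ : IsCompact (Set.univ : Set α)).tendsto_subseq
      (x := fun k => x (f k)) (fun n => Set.mem_univ _)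
  obtain ⟨N, hN⟩ := (Metric.tendsto_atTop.mp hconv) (δ/2) (by linarith)
  have h1 := hN N le_rfl
  have h2 := hN (N+1) (Nat.le_succ N)
  simp only [Function.comp] at h1 h2
  have hne : ((f (φ N)) : ℕ) ≠ ((f (φ (N+1))) : ℕ) := by
    intro h
    have := f.injective (Subtype.ext h)
    exact absurd (hφ.injective this) (Nat.succ_ne_self N).symm
  have hd : dist (x (f (φ N))) (x (f (φ (N+1)))) < δ := by
    calc dist (x (f (φ N))) (x (f (φ (N+1))))
        ≤ dist (x (f (φ N))) a + dist (x (f (φ (N+1)))) a := dist_triangle_right _ _ _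
      _ < δ/2 + δ/2 := by exact add_lt_add h1 h2
      _ = δ := by ring
  rcases lt_or_gt_of_ne hne with h | h
  · have := hsep _ (f (φ N)).2 _ (f (φ (N+1))).2 h
    linarith
  · have := hsep _ (f (φ (N+1))).2 _ (f (φ N)).2 h
    rw [dist_comm] at this
    linarith

lemma do_aux {α β : Type*} [MetricSpace α] [CompactSpace α] [MeasurableSpace α] [BorelSpace α]
    [MetricSpace β] [CompactSpace β] [MeasurableSpace β] [BorelSpace β]
    (u : α × β → ℝ) (hu : Continuous u) (ε : ℝ) (hε : 0 < ε)
    (q : ℕ → Measure β) (hq : ∀ i, IsProbabilityMeasure (q i))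
    (xs : ℕ → α) (S : Set ℕ) (hS : S.Infinite)
    (hkey : ∀ i ∈ S, ∀ j ∈ S, i < j →
      (∫ y, u (xs i, y) ∂(q j)) + ε ≤ ∫ y, u (xs j, y) ∂(q j)) : False := by
  obtain ⟨C, hC⟩ := (isCompact_univ : IsCompact (Set.univ : Set (α × β))).exists_bound_of_continuousOn
    hu.continuousOn
  have hCa : ∀ z, ‖u z‖ ≤ C := fun z => hC z trivial
  have hint : ∀ (x : α) (i : ℕ), Integrable (fun y => u (x, y)) (q i) := by
    intro x i
    haveI := hq i
    exact integrable_of_bound (hu.comp (continuous_const.prodMk continuous_id))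
      (fun y => hCa (x, y))
  obtain ⟨δ, hδ, hδ'⟩ := Metric.uniformContinuous_iff.mp
    (CompactSpace.uniformContinuous_of_continuous hu) (ε/2) (by linarith)
  refine sep_lemma xs δ hδ S hS ?_
  intro i hi j hj hij
  by_contra hlt
  push_neg at hlt
  have hpt : ∀ y : β, u (xs j, y) ≤ u (xs i, y) + ε/2 := by
    intro y
    have hdp : dist ((xs j, y) : α × β) (xs i, y) < δ := by
      rw [Prod.dist_eq]
      simp only [dist_self]
      rw [max_eq_left dist_nonneg, dist_comm]
      exact hlt
    have habs : |u (xs j, y) - u (xs i, y)| < ε/2 := by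
      have := hδ' hdp
      rwa [Real.dist_eq] at this
    linarith [(abs_lt.mp habs).2]
  haveI := hq j
  have hmono : (∫ y, u (xs j, y) ∂(q j)) ≤ (∫ y, u (xs i, y) ∂(q j)) + ε/2 := by
    have h2 : (∫ y, u (xs i, y) ∂(q j)) + ε/2 = ∫ y, (u (xs i, y) + ε/2) ∂(q j) := by
      rw [integral_add (hint _ _) (integrable_const _), integral_const]
      simp
    rw [h2]
    exact integral_mono (hint _ _) ((hint _ _).add (integrable_const _)) hpt
  have := hkey i hi j hj hij
  linarith

end Stmt11Aux

/-- for ε > 0, along any run of the double oracle algorithm there is a step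
with duality gap ≤ ε whose subgame equilibrium is a finitely supported ε-equilibrium of G. -/
theorem stmt_11 {m n : ℕ}
    (X : Set (EuclideanSpace ℝ (Fin m))) (Y : Set (EuclideanSpace ℝ (Fin n)))
    (hXne : X.Nonempty) (hXc : IsCompact X) (hYne : Y.Nonempty) (hYc : IsCompact Y)
    (u : X × Y → ℝ) (hu : Continuous u)
    (ε : ℝ) (hε : 0 < ε)
    -- iterates of the double oracle algorithm
    (Xi : ℕ → Finset X) (Yi : ℕ → Finset Y)
    (hXi : ∀ i, (Xi i).Nonempty) (hYi : ∀ i, (Yi i).Nonempty)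
    (ps : ℕ → Measure X) (qs : ℕ → Measure Y)
    (hpsprob : ∀ i, IsProbabilityMeasure (ps i)) (hqsprob : ∀ i, IsProbabilityMeasure (qs i))
    (hpssupp : ∀ i, ps i ((↑(Xi i) : Set X)ᶜ) = 0)
    (hqssupp : ∀ i, qs i ((↑(Yi i) : Set Y)ᶜ) = 0)
    (hsub₁ : ∀ i, ∀ x ∈ Xi i,
      ∫ z, u z ∂((Measure.dirac x).prod (qs i)) ≤ ∫ z, u z ∂((ps i).prod (qs i)))
    (hsub₂ : ∀ i, ∀ y ∈ Yi i,
      ∫ z, u z ∂((ps i).prod (qs i)) ≤ ∫ z, u z ∂((ps i).prod (Measure.dirac y)))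
    (xseq : ℕ → X) (yseq : ℕ → Y)
    (hx : ∀ i, ∀ x : X,
      ∫ z, u z ∂((Measure.dirac x).prod (qs i)) ≤ ∫ z, u z ∂((Measure.dirac (xseq i)).prod (qs i)))
    (hy : ∀ i, ∀ y : Y,
      ∫ z, u z ∂((ps i).prod (Measure.dirac (yseq i))) ≤ ∫ z, u z ∂((ps i).prod (Measure.dirac y)))
    (hXrec : ∀ i, (↑(Xi (i + 1)) : Set X) = insert (xseq i) ↑(Xi i))
    (hYrec : ∀ i, (↑(Yi (i + 1)) : Set Y) = insert (yseq i) ↑(Yi i)) :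
    ∃ i,
      -- the terminating condition is reached in finitely many steps
      (∫ z, u z ∂((Measure.dirac (xseq i)).prod (qs i)))
        - (∫ z, u z ∂((ps i).prod (Measure.dirac (yseq i)))) ≤ ε ∧
      -- (ps i, qs i) is finitely supported
      (∃ s : Finset X, ps i ((↑s : Set X)ᶜ) = 0) ∧
      (∃ t : Finset Y, qs i ((↑t : Set Y)ᶜ) = 0) ∧
      -- and is an ε-equilibrium of G
      (∀ (p : Measure X) [IsProbabilityMeasure p],
        ∫ z, u z ∂(p.prod (qs i)) - ε ≤ ∫ z, u z ∂((ps i).prod (qs i))) ∧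
      (∀ (q : Measure Y) [IsProbabilityMeasure q],
        ∫ z, u z ∂((ps i).prod (qs i)) ≤ ∫ z, u z ∂((ps i).prod q) + ε) := by
  classical
  haveI : CompactSpace ↥X := isCompact_iff_compactSpace.mp hXc
  haveI : CompactSpace ↥Y := isCompact_iff_compactSpace.mp hYc
  obtain ⟨C, hC⟩ := (isCompact_univ : IsCompact (Set.univ : Set (↥X × ↥Y))).exists_bound_of_continuousOn
    hu.continuousOn
  have hCa : ∀ z, ‖u z‖ ≤ C := fun z => hC z trivial
  have hconty : ∀ x : ↥X, Continuous (fun y : ↥Y => u (x, y)) :=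
    fun x => hu.comp (continuous_const.prodMk continuous_id)
  have hcontx : ∀ y : ↥Y, Continuous (fun x : ↥X => u (x, y)) :=
    fun y => hu.comp (continuous_id.prodMk continuous_const)
  have hinty : ∀ (x : ↥X) (q : Measure ↥Y) [IsProbabilityMeasure q],
      Integrable (fun y => u (x, y)) q :=
    fun x q _ => Stmt11Aux.integrable_of_bound (hconty x) (fun y => hCa (x, y))
  have hintx : ∀ (y : ↥Y) (p : Measure ↥X) [IsProbabilityMeasure p],
      Integrable (fun x => u (x, y)) p :=
    fun y p _ => Stmt11Aux.integrable_of_bound (hcontx y) (fun x => hCa (x, y))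
  have hintu : ∀ (p : Measure ↥X) (q : Measure ↥Y) [IsProbabilityMeasure p] [IsProbabilityMeasure q],
      Integrable u (p.prod q) :=
    fun p q _ _ => Stmt11Aux.integrable_of_bound hu hCa
  -- dirac identities
  have hdx : ∀ (x : ↥X) (q : Measure ↥Y) [IsProbabilityMeasure q],
      ∫ z, u z ∂((Measure.dirac x).prod q) = ∫ y, u (x, y) ∂q := by
    intro x q hq
    rw [integral_prod _ (hintu _ _), integral_dirac]
  have hdy : ∀ (y : ↥Y) (p : Measure ↥X) [IsProbabilityMeasure p],
      ∫ z, u z ∂(p.prod (Measure.dirac y)) = ∫ x, u (x, y) ∂p := by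
    intro y p hp
    rw [integral_prod_symm _ (hintu _ _), integral_dirac]
  -- inner-integral measurability and integrability
  have hmF : ∀ (q : Measure ↥Y) [IsProbabilityMeasure q],
      StronglyMeasurable (fun x : ↥X => ∫ y, u (x, y) ∂q) := by
    intro q _
    exact StronglyMeasurable.integral_prod_right (f := fun x y => u (x, y)) hu.stronglyMeasurable
  have hmG : ∀ (p : Measure ↥X) [IsProbabilityMeasure p],
      StronglyMeasurable (fun y : ↥Y => ∫ x, u (x, y) ∂p) := by
    intro p _
    exact StronglyMeasurable.integral_prod_left (f := fun x y => u (x, y)) hu.stronglyMeasurable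
  have hFbound : ∀ (q : Measure ↥Y) [IsProbabilityMeasure q] (x : ↥X),
      ‖∫ y, u (x, y) ∂q‖ ≤ C := by
    intro q hq x
    calc ‖∫ y, u (x, y) ∂q‖ ≤ ∫ y, ‖u (x, y)‖ ∂q := norm_integral_le_integral_norm _
      _ ≤ ∫ _y, C ∂q :=
        integral_mono (hinty x q).norm (integrable_const C) (fun y => hCa _)
      _ = C := by simp
  have hGbound : ∀ (p : Measure ↥X) [IsProbabilityMeasure p] (y : ↥Y),
      ‖∫ x, u (x, y) ∂p‖ ≤ C := by
    intro p hp y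
    calc ‖∫ x, u (x, y) ∂p‖ ≤ ∫ x, ‖u (x, y)‖ ∂p := norm_integral_le_integral_norm _
      _ ≤ ∫ _x, C ∂p :=
        integral_mono (hintx y p).norm (integrable_const C) (fun x => hCa _)
      _ = C := by simp
  have hintF : ∀ (q : Measure ↥Y) [IsProbabilityMeasure q] (p : Measure ↥X) [IsProbabilityMeasure p],
      Integrable (fun x => ∫ y, u (x, y) ∂q) p := by
    intro q hq p hp
    exact ⟨(hmF q).aestronglyMeasurable,
      HasFiniteIntegral.of_bounded (Eventually.of_forall (hFbound q))⟩
  have hintG : ∀ (p : Measure ↥X) [IsProbabilityMeasure p] (q : Measure ↥Y) [IsProbabilityMeasure q],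
      Integrable (fun y => ∫ x, u (x, y) ∂p) q := by
    intro p hp q hq
    exact ⟨(hmG p).aestronglyMeasurable,
      HasFiniteIntegral.of_bounded (Eventually.of_forall (hGbound p))⟩
  -- Fubini
  have hUF : ∀ (p : Measure ↥X) (q : Measure ↥Y) [IsProbabilityMeasure p] [IsProbabilityMeasure q],
      ∫ z, u z ∂(p.prod q) = ∫ x, ∫ y, u (x, y) ∂q ∂p :=
    fun p q _ _ => integral_prod _ (hintu p q)
  have hUG : ∀ (p : Measure ↥X) (q : Measure ↥Y) [IsProbabilityMeasure p] [IsProbabilityMeasure q],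
      ∫ z, u z ∂(p.prod q) = ∫ y, ∫ x, u (x, y) ∂p ∂q :=
    fun p q _ _ => integral_prod_symm _ (hintu p q)
  -- rewritten hypotheses
  have hx' : ∀ i (x : ↥X), (∫ y, u (x, y) ∂qs i) ≤ ∫ y, u (xseq i, y) ∂qs i := by
    intro i x
    haveI := hqsprob i
    have h := hx i x
    rwa [hdx, hdx] at h
  have hy' : ∀ i (y : ↥Y), (∫ x, u (x, yseq i) ∂ps i) ≤ ∫ x, u (x, y) ∂ps i := by
    intro i y
    haveI := hpsprob i
    have h := hy i y
    rwa [hdy, hdy] at h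
  have hs1 : ∀ i, ∀ x ∈ Xi i,
      (∫ y, u (x, y) ∂qs i) ≤ ∫ z, u z ∂((ps i).prod (qs i)) := by
    intro i x hxm
    haveI := hqsprob i
    have h := hsub₁ i x hxm
    rwa [hdx] at h
  have hs2 : ∀ i, ∀ y ∈ Yi i,
      (∫ z, u z ∂((ps i).prod (qs i))) ≤ ∫ x, u (x, y) ∂ps i := by
    intro i y hym
    haveI := hpsprob i
    have h := hsub₂ i y hym
    rwa [hdy] at h
  -- payoff bounds for arbitrary strategies
  have hUp : ∀ i (p : Measure ↥X) [IsProbabilityMeasure p],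
      (∫ z, u z ∂(p.prod (qs i))) ≤ ∫ y, u (xseq i, y) ∂qs i := by
    intro i p hp
    haveI := hqsprob i
    rw [hUF p (qs i)]
    calc ∫ x, ∫ y, u (x, y) ∂qs i ∂p ≤ ∫ _x, (∫ y, u (xseq i, y) ∂qs i) ∂p :=
        integral_mono (hintF (qs i) p) (integrable_const _) (fun x => hx' i x)
      _ = _ := by simp
  have hUq : ∀ i (q : Measure ↥Y) [IsProbabilityMeasure q],
      (∫ x, u (x, yseq i) ∂ps i) ≤ ∫ z, u z ∂((ps i).prod q) := by
    intro i q hq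
    haveI := hpsprob i
    rw [hUG (ps i) q]
    calc (∫ x, u (x, yseq i) ∂ps i) = ∫ _y, (∫ x, u (x, yseq i) ∂ps i) ∂q := by simp
      _ ≤ _ := integral_mono (integrable_const _) (hintG (ps i) q) (fun y => hy' i y)
  -- growth of the subgames
  have hXmono : ∀ i j, i ≤ j → (↑(Xi i) : Set ↥X) ⊆ ↑(Xi j) := by
    intro i j hij
    induction hij with
    | refl => exact subset_rfl
    | step h ih =>
        rename_i k hk
        exact ih.trans (by rw [hXrec]; exact Set.subset_insert _ _)
  have hYmono : ∀ i j, i ≤ j → (↑(Yi i) : Set ↥Y) ⊆ ↑(Yi j) := by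
    intro i j hij
    induction hij with
    | refl => exact subset_rfl
    | step h ih =>
        rename_i k hk
        exact ih.trans (by rw [hYrec]; exact Set.subset_insert _ _)
  have hxmem : ∀ i j, i < j → xseq i ∈ Xi j := by
    intro i j hij
    have h1 : xseq i ∈ (↑(Xi (i+1)) : Set ↥X) := by
      rw [hXrec]; exact Set.mem_insert _ _
    exact hXmono (i+1) j hij h1
  have hymem : ∀ i j, i < j → yseq i ∈ Yi j := by
    intro i j hij
    have h1 : yseq i ∈ (↑(Yi (i+1)) : Set ↥Y) := by
      rw [hYrec]; exact Set.mem_insert _ _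
    exact hYmono (i+1) j hij h1
  -- the terminating step exists
  have main : ∃ i, (∫ y, u (xseq i, y) ∂qs i) - (∫ x, u (x, yseq i) ∂ps i) ≤ ε := by
    by_contra hcon
    push_neg at hcon
    have hST : ∀ i : ℕ,
        ((∫ z, u z ∂((ps i).prod (qs i))) + ε/2 < ∫ y, u (xseq i, y) ∂qs i) ∨
        ((∫ x, u (x, yseq i) ∂ps i) + ε/2 < ∫ z, u z ∂((ps i).prod (qs i))) := by
      intro i
      have := hcon i
      rcases lt_or_ge ((∫ z, u z ∂((ps i).prod (qs i))) + ε/2) (∫ y, u (xseq i, y) ∂qs i) with h | h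
      · exact Or.inl h
      · exact Or.inr (by linarith)
    set S : Set ℕ := {i | (∫ z, u z ∂((ps i).prod (qs i))) + ε/2 < ∫ y, u (xseq i, y) ∂qs i}
      with hSdef
    set T : Set ℕ := {i | (∫ x, u (x, yseq i) ∂ps i) + ε/2 < ∫ z, u z ∂((ps i).prod (qs i))}
      with hTdef
    have hsub : (Set.univ : Set ℕ) ⊆ S ∪ T := by
      intro i _
      rcases hST i with h | h
      · exact Or.inl h
      · exact Or.inr h
    have hinf : S.Infinite ∨ T.Infinite := by
      by_contra h
      push_neg at h
      obtain ⟨h1, h2⟩ := h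
      exact Set.infinite_univ (Set.Finite.subset (h1.union h2) hsub)
    rcases hinf with hSinf | hTinf
    · refine Stmt11Aux.do_aux u hu (ε/2) (by linarith) qs hqsprob xseq S hSinf ?_
      intro i hi j hj hij
      have h1 := hs1 j (xseq i) (hxmem i j hij)
      have h2 : (∫ z, u z ∂((ps j).prod (qs j))) + ε/2 < ∫ y, u (xseq j, y) ∂qs j := hj
      linarith
    · refine Stmt11Aux.do_aux (fun z : ↥Y × ↥X => -u (z.2, z.1))
        ((hu.comp (continuous_snd.prodMk continuous_fst)).neg) (ε/2) (by linarith)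
        ps hpsprob yseq T hTinf ?_
      intro i hi j hj hij
      have h1 := hs2 j (yseq i) (hymem i j hij)
      have h2 : (∫ x, u (x, yseq j) ∂ps j) + ε/2 < ∫ z, u z ∂((ps j).prod (qs j)) := hj
      simp only [integral_neg]
      linarith
  obtain ⟨i, hi⟩ := main
  haveI := hpsprob i
  haveI := hqsprob i
  refine ⟨i, ?_, ⟨Xi i, hpssupp i⟩, ⟨Yi i, hqssupp i⟩, ?_, ?_⟩
  · rw [hdx, hdy]; exact hi
  · intro p hp
    have h1 := hUp i p
    have h2 := hUq i (qs i)
    linarith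
  · intro q hq
    have h1 := hUp i (ps i)
    have h2 := hUq i q
    linarith
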